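/- Let T > 0, n ∈ ℕ, σ ∈ ℕ, U ⊆ {0,1}ⁿ, and p ∈ [1,∞). Let D := D_max^Σ(U) be the set of all u ∈ L^p((0,T);ℝⁿ) having a representative v with v(t) ∈ U for all t ∈ (0,T) and Σ_{j=1}^n Var(v_j;(0,T)) ≤ σ (pointwise total variation). Let I₁,…,I_M be pairwise disjoint nonempty bounded open subintervals of (0,T), let j₁,…,j_M ∈ {1,…,n}, and define Π : L^p((0,T);ℝⁿ) → ℝ^M by Π(u)_i = (1/λ(I_i)) ∫_{I_i} u_{j_i} dλ. Define K := {Π(u) : u ∈ D such that for every i = 1,…,M there exists w_i ∈ U with u = w_i almost everywhere on I_i}. Then C_{D,Π} := conv{Π(u) : u ∈ D} = conv(K); in particular, since K ⊆ {0,1}^M is finite, C_{D,Π} is a 0/1-polytope in ℝ^M. -/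

import Mathlib

open MeasureTheory Set Filter
open scoped ENNReal

/-- The set `D_max^Σ(U)` of controls with a representative taking values in
`U ⊆ {0,1}ⁿ` at every time and with total pointwise variation of all
components bounded by `σ`. -/
def Dmax (T : ℝ) (n : ℕ) (σ : ℕ) (U : Set (Fin n → ℝ)) (p : ℝ≥0∞) :
    Set (Lp (Fin n → ℝ) p (volume.restrict (Ioo (0:ℝ) T))) :=
  {u | ∃ v : ℝ → Fin n → ℝ,
        ((u : ℝ → Fin n → ℝ) =ᵐ[volume.restrict (Ioo (0:ℝ) T)] v) ∧
        (∀ t ∈ Ioo (0:ℝ) T, v t ∈ U) ∧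
        (∑ j : Fin n, eVariationOn (fun s => v s j) (Ioo (0:ℝ) T)) ≤ (σ : ℝ≥0∞)}

/-- The local averaging projection `Π(u)_i = (1/λ(I_i)) ∫_{I_i} u_{j_i} dλ`
for intervals `I_i = (a i, b i)`. -/
noncomputable def projM (T : ℝ) (n : ℕ) (p : ℝ≥0∞) (M : ℕ)
    (a b : Fin M → ℝ) (j : Fin M → Fin n)
    (u : Lp (Fin n → ℝ) p (volume.restrict (Ioo (0:ℝ) T))) : Fin M → ℝ :=
  fun i => (b i - a i)⁻¹ *
    ∫ t in Ioo (a i) (b i), (u : ℝ → Fin n → ℝ) t (j i)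
      ∂(volume.restrict (Ioo (0:ℝ) T))

lemma projM_of_ae_const
    {T : ℝ} {n : ℕ} {p : ℝ≥0∞} {M : ℕ} {a b : Fin M → ℝ} {j : Fin M → Fin n}
    (u : Lp (Fin n → ℝ) p (volume.restrict (Ioo (0:ℝ) T)))
    (i : Fin M) (hab : a i < b i) (hsub : Ioo (a i) (b i) ⊆ Ioo (0:ℝ) T)
    (w : Fin n → ℝ)
    (hw : ∀ᵐ t ∂(volume.restrict (Ioo (a i) (b i))), (u : ℝ → Fin n → ℝ) t = w) :
    projM T n p M a b j u i = w (j i) := by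
  have hres : (volume.restrict (Ioo (0:ℝ) T)).restrict (Ioo (a i) (b i))
      = volume.restrict (Ioo (a i) (b i)) := by
    rw [Measure.restrict_restrict measurableSet_Ioo, inter_eq_self_of_subset_left hsub]
  show (b i - a i)⁻¹ * ∫ t in Ioo (a i) (b i), (u : ℝ → Fin n → ℝ) t (j i)
      ∂(volume.restrict (Ioo (0:ℝ) T)) = w (j i)
  rw [show (∫ t in Ioo (a i) (b i), (u : ℝ → Fin n → ℝ) t (j i)
      ∂(volume.restrict (Ioo (0:ℝ) T)))
      = ∫ t, (u : ℝ → Fin n → ℝ) t (j i) ∂(volume.restrict (Ioo (a i) (b i))) from by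
    rw [hres]]
  rw [integral_congr_ae (g := fun _ => w (j i)) (hw.mono fun t ht => by rw [ht])]
  rw [integral_const]
  simp only [Measure.restrict_apply_univ, Real.volume_Ioo, smul_eq_mul]
  simp only [measureReal_def, Measure.restrict_apply_univ, Real.volume_Ioo]
  rw [ENNReal.toReal_ofReal (by linarith)]
  rw [← mul_assoc, inv_mul_cancel₀ (by linarith), one_mul]

lemma disjoint_Ioo_order {a1 b1 a2 b2 t1 t2 : ℝ}
    (hd : Disjoint (Ioo a1 b1) (Ioo a2 b2))
    (ht1 : t1 ∈ Ioo a1 b1) (ht2 : t2 ∈ Ioo a2 b2) (hle : t1 ≤ t2) : b1 ≤ a2 := by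
  by_contra h
  push_neg at h
  apply Set.not_disjoint_iff.2 ?_ hd
  obtain ⟨hta1, htb1⟩ := ht1
  obtain ⟨hta2, htb2⟩ := ht2
  have h2 : max a1 a2 < min b1 b2 := by
    simp only [max_lt_iff, lt_min_iff]
    exact ⟨⟨by linarith, by linarith⟩, ⟨by linarith, by linarith⟩⟩
  have e1 := le_max_left a1 a2
  have e2 := le_max_right a1 a2
  have e3 := min_le_left b1 b2
  have e4 := min_le_right b1 b2
  exact ⟨(max a1 a2 + min b1 b2) / 2, ⟨by linarith, by linarith⟩, ⟨by linarith, by linarith⟩⟩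

lemma map_affine_restrict {A B : ℝ} (h : A < B) :
    Measure.map (fun θ : ℝ => A + (B - A) * θ) (volume.restrict (Ioo (0:ℝ) 1))
      = (ENNReal.ofReal (B - A))⁻¹ • volume.restrict (Ioo A B) := by
  set c := B - A with hc
  have hc0 : 0 < c := by simp [hc]; linarith
  have hmeas : Measurable (fun θ : ℝ => A + c * θ) :=
    (measurable_const_mul c).const_add A
  have hpre : (fun θ : ℝ => A + c * θ) ⁻¹' (Ioo A B) = Ioo (0:ℝ) 1 := by
    ext θ
    simp only [Set.mem_preimage, Set.mem_Ioo]
    constructor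
    · rintro ⟨h1, h2⟩
      constructor <;> nlinarith
    · rintro ⟨h1, h2⟩
      constructor <;> nlinarith
  rw [← hpre, ← Measure.restrict_map hmeas measurableSet_Ioo]
  have hcomp : (fun θ : ℝ => A + c * θ) = (fun x : ℝ => A + x) ∘ (fun θ : ℝ => c * θ) := rfl
  rw [hcomp, ← Measure.map_map (measurable_const_add A) (measurable_const_mul c),
    Real.map_volume_mul_left (ne_of_gt hc0)]
  rw [Measure.map_smul]
  rw [MeasureTheory.Measure.IsAddLeftInvariant.map_add_left_eq_self (μ := (volume : Measure ℝ)) A]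
  rw [Measure.restrict_smul]
  congr 1
  rw [abs_of_pos (inv_pos.2 hc0), ENNReal.ofReal_inv_of_pos hc0]

lemma sample_lemma
    (T : ℝ) (n σ : ℕ) (U : Set (Fin n → ℝ)) (p : ℝ≥0∞) [Fact (1 ≤ p)]
    (M : ℕ) (a b : Fin M → ℝ)
    (hsub : ∀ i, Ioo (a i) (b i) ⊆ Ioo (0:ℝ) T)
    (hdisj : ∀ i i' : Fin M, i ≠ i' → Disjoint (Ioo (a i) (b i)) (Ioo (a i') (b i')))
    (u : Lp (Fin n → ℝ) p (volume.restrict (Ioo (0:ℝ) T)))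
    (v : ℝ → Fin n → ℝ)
    (hv_ae : (u : ℝ → Fin n → ℝ) =ᵐ[volume.restrict (Ioo (0:ℝ) T)] v)
    (hv_mem : ∀ t ∈ Ioo (0:ℝ) T, v t ∈ U)
    (hv_var : (∑ k : Fin n, eVariationOn (fun s => v s k) (Ioo (0:ℝ) T)) ≤ (σ : ℝ≥0∞))
    (hU : ∀ w ∈ U, ∀ k, w k = 0 ∨ w k = 1)
    (s : Fin M → ℝ) (hs : ∀ i, s i ∈ Ioo (a i) (b i)) :
    ∃ u' ∈ Dmax T n σ U p,
      (∀ i, ∀ᵐ t ∂(volume.restrict (Ioo (a i) (b i))),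
        (u' : ℝ → Fin n → ℝ) t = v (s i)) := by
  classical
  have huniq : ∀ {t : ℝ} {i i' : Fin M}, t ∈ Ioo (a i) (b i) → t ∈ Ioo (a i') (b i') →
      i = i' := by
    intro t i i' h1 h2
    by_contra hne
    exact Set.not_disjoint_iff.2 ⟨t, h1, h2⟩ (hdisj i i' hne)
  set φ : ℝ → ℝ := fun t => if h : ∃ i, t ∈ Ioo (a i) (b i) then s h.choose else t with hφdef
  have hφ_on : ∀ {t : ℝ} {i : Fin M}, t ∈ Ioo (a i) (b i) → φ t = s i := by
    intro t i ht
    have h : ∃ i, t ∈ Ioo (a i) (b i) := ⟨i, ht⟩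
    simp only [hφdef, dif_pos h]
    exact congrArg s (huniq h.choose_spec ht)
  have hφ_off : ∀ {t : ℝ}, (¬ ∃ i, t ∈ Ioo (a i) (b i)) → φ t = t := by
    intro t h; simp only [hφdef, dif_neg h]
  have hφ_mono : Monotone φ := by
    intro t t' hle
    rcases eq_or_lt_of_le hle with rfl | hlt
    · exact le_rfl
    by_cases h1 : ∃ i, t ∈ Ioo (a i) (b i)
    · obtain ⟨i, hi⟩ := h1
      rw [hφ_on hi]
      by_cases h2 : ∃ i', t' ∈ Ioo (a i') (b i')
      · obtain ⟨i', hi'⟩ := h2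
        rw [hφ_on hi']
        by_cases hii : i = i'
        · subst hii; exact le_rfl
        · have hb : b i ≤ a i' := disjoint_Ioo_order (hdisj i i' hii) hi hi' hle
          have h3 := (hs i).2
          have h4 := (hs i').1
          linarith
      · rw [hφ_off h2]
        by_cases hbt : b i ≤ t'
        · have := (hs i).2; linarith
        · push_neg at hbt
          exact absurd ⟨i, ⟨lt_trans hi.1 hlt, hbt⟩⟩ h2
    · rw [hφ_off h1]
      by_cases h2 : ∃ i', t' ∈ Ioo (a i') (b i')
      · obtain ⟨i', hi'⟩ := h2
        rw [hφ_on hi']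
        by_cases hat : t ≤ a i'
        · have := (hs i').1; linarith
        · push_neg at hat
          exact absurd ⟨i', ⟨hat, lt_trans hlt hi'.2⟩⟩ h1
      · rw [hφ_off h2]; exact hle
  have hφ_mem : ∀ t ∈ Ioo (0:ℝ) T, φ t ∈ Ioo (0:ℝ) T := by
    intro t ht
    by_cases h : ∃ i, t ∈ Ioo (a i) (b i)
    · obtain ⟨i, hi⟩ := h; rw [hφ_on hi]; exact hsub i (hs i)
    · rw [hφ_off h]; exact ht
  set vφ : ℝ → Fin n → ℝ := fun t => v (φ t) with hvφdef
  set g0 : ℝ → Fin n → ℝ := fun t =>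
    (∑ i : Fin M, (Ioo (a i) (b i)).indicator (fun _ => v (s i)) t)
    + ((⋃ i, Ioo (a i) (b i))ᶜ).indicator (fun t => (u : ℝ → Fin n → ℝ) t) t with hg0def
  have hg0_meas : AEStronglyMeasurable g0 (volume.restrict (Ioo (0:ℝ) T)) := by
    apply AEStronglyMeasurable.add
    · apply Finset.aestronglyMeasurable_fun_sum
      intro i _
      exact aestronglyMeasurable_const.indicator measurableSet_Ioo
    · exact (Lp.aestronglyMeasurable u).indicator
        ((MeasurableSet.iUnion fun i => measurableSet_Ioo).compl)
  have h_eq : vφ =ᵐ[volume.restrict (Ioo (0:ℝ) T)] g0 := by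
    filter_upwards [hv_ae] with t htu
    by_cases h : ∃ i, t ∈ Ioo (a i) (b i)
    · obtain ⟨i, hi⟩ := h
      have hsum : (∑ i' : Fin M, (Ioo (a i') (b i')).indicator (fun _ => v (s i')) t)
          = v (s i) := by
        rw [Finset.sum_eq_single i]
        · rw [Set.indicator_of_mem hi]
        · intro i' _ hne
          exact Set.indicator_of_notMem (fun hmem => hne (huniq hmem hi)) _
        · intro habs; exact absurd (Finset.mem_univ i) habs
      have hnotin : t ∉ (⋃ i', Ioo (a i') (b i'))ᶜ := by
        simp only [Set.mem_compl_iff, Set.mem_iUnion, not_not]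
        exact ⟨i, hi⟩
      have hind := Set.indicator_of_notMem hnotin (fun t => (u : ℝ → Fin n → ℝ) t)
      show v (φ t) = (∑ i' : Fin M, (Ioo (a i') (b i')).indicator (fun _ => v (s i')) t)
        + ((⋃ i', Ioo (a i') (b i'))ᶜ).indicator (fun t => (u : ℝ → Fin n → ℝ) t) t
      rw [hφ_on hi, hsum, hind, add_zero]
    · have h0 : (∑ i' : Fin M, (Ioo (a i') (b i')).indicator (fun _ => v (s i')) t) = 0 :=
        Finset.sum_eq_zero fun i' _ => Set.indicator_of_notMem (fun hm => h ⟨i', hm⟩) _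
      have hin : t ∈ (⋃ i', Ioo (a i') (b i'))ᶜ := by
        simp only [Set.mem_compl_iff, Set.mem_iUnion]
        exact h
      have h2 := Set.indicator_of_mem hin (fun t => (u : ℝ → Fin n → ℝ) t)
      show v (φ t) = (∑ i' : Fin M, (Ioo (a i') (b i')).indicator (fun _ => v (s i')) t)
        + ((⋃ i', Ioo (a i') (b i'))ᶜ).indicator (fun t => (u : ℝ → Fin n → ℝ) t) t
      rw [hφ_off h, h0, h2, zero_add, htu]
  have hsm : AEStronglyMeasurable vφ (volume.restrict (Ioo (0:ℝ) T)) := hg0_meas.congr h_eq.symm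
  have hbdd : ∀ᵐ t ∂(volume.restrict (Ioo (0:ℝ) T)), ‖vφ t‖ ≤ 1 := by
    filter_upwards [ae_restrict_mem measurableSet_Ioo] with t ht
    have hmem := hv_mem _ (hφ_mem t ht)
    rw [pi_norm_le_iff_of_nonneg zero_le_one]
    intro k
    rcases hU _ hmem k with h | h <;>
      · rw [show vφ t k = v (φ t) k from rfl, h]; norm_num
  have hmemLp : MemLp vφ p (volume.restrict (Ioo (0:ℝ) T)) := MemLp.of_bound hsm 1 hbdd
  refine ⟨hmemLp.toLp vφ, ?_, ?_⟩
  · refine ⟨vφ, hmemLp.coeFn_toLp, fun t ht => hv_mem _ (hφ_mem t ht), ?_⟩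
    refine le_trans (Finset.sum_le_sum fun k _ => ?_) hv_var
    exact eVariationOn.comp_le_of_monotoneOn (fun t => v t k) φ
      (hφ_mono.monotoneOn _) hφ_mem
  · intro i
    have hle : volume.restrict (Ioo (a i) (b i)) ≤ volume.restrict (Ioo (0:ℝ) T) :=
      Measure.restrict_mono (hsub i) le_rfl
    have h1 : (hmemLp.toLp vφ : ℝ → Fin n → ℝ) =ᵐ[volume.restrict (Ioo (a i) (b i))] vφ :=
      hmemLp.coeFn_toLp.filter_mono (ae_mono hle)
    filter_upwards [h1, ae_restrict_mem measurableSet_Ioo] with t h1t h2t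
    rw [h1t]
    show v (φ t) = v (s i)
    rw [hφ_on h2t]


/-- Theorem 3.6: `C_{D,Π} = conv K` where `K` consists of the
projections of those feasible controls that are constant (with value in `U`)
on each interval `I_i`; in particular `K ⊆ {0,1}^M`, so `C_{D,Π}` is a
0/1-polytope. -/
theorem stmt_12
    (T : ℝ) (hT : 0 < T) (n : ℕ) (σ : ℕ)
    (U : Set (Fin n → ℝ)) (hU : ∀ w ∈ U, ∀ j, w j = 0 ∨ w j = 1)
    (p : ℝ≥0∞) [Fact (1 ≤ p)] (hp : p ≠ ⊤)
    (M : ℕ) (a b : Fin M → ℝ) (hab : ∀ i, a i < b i)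
    (hsub : ∀ i, Ioo (a i) (b i) ⊆ Ioo (0:ℝ) T)
    (hdisj : ∀ i i' : Fin M, i ≠ i' →
      Disjoint (Ioo (a i) (b i)) (Ioo (a i') (b i')))
    (j : Fin M → Fin n) :
    convexHull ℝ (projM T n p M a b j '' Dmax T n σ U p) =
      convexHull ℝ (projM T n p M a b j ''
        {u ∈ Dmax T n σ U p | ∀ i : Fin M, ∃ w ∈ U,
          ∀ᵐ t ∂(volume.restrict (Ioo (a i) (b i))),
            (u : ℝ → Fin n → ℝ) t = w}) ∧
    (projM T n p M a b j ''
        {u ∈ Dmax T n σ U p | ∀ i : Fin M, ∃ w ∈ U,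
          ∀ᵐ t ∂(volume.restrict (Ioo (a i) (b i))),
            (u : ℝ → Fin n → ℝ) t = w}) ⊆
      {x : Fin M → ℝ | ∀ i, x i = 0 ∨ x i = 1} := by
  classical
  constructor
  · -- the convex hull equality
    apply Set.Subset.antisymm
    · -- hard direction
      apply convexHull_min ?_ (convex_convexHull ℝ _)
      rintro x ⟨u, hu, rfl⟩
      obtain ⟨v, hv_ae, hv_mem, hv_var⟩ := hu
      set ν : Measure ℝ := volume.restrict (Ioo (0:ℝ) 1) with hνdef
      set aff : Fin M → ℝ → ℝ := fun i θ => a i + (b i - a i) * θ with haffdef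
      have haff_meas : ∀ i, Measurable (aff i) := fun i =>
        (measurable_const_mul (b i - a i)).const_add (a i)
      have hmap : ∀ i, Measure.map (aff i) ν
          = (ENNReal.ofReal (b i - a i))⁻¹ • volume.restrict (Ioo (a i) (b i)) :=
        fun i => map_affine_restrict (hab i)
      have haff_mem : ∀ i, ∀ θ ∈ Ioo (0:ℝ) 1, aff i θ ∈ Ioo (a i) (b i) := by
        intro i θ hθ
        obtain ⟨h1, h2⟩ := hθ
        have := hab i
        constructor <;> simp only [haffdef] <;> nlinarith
      have hrle : ∀ i, volume.restrict (Ioo (a i) (b i))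
          ≤ volume.restrict (Ioo (0:ℝ) T) := fun i => Measure.restrict_mono (hsub i) le_rfl
      -- a.e. measurable versions of θ ↦ v (aff i θ) (j i)
      have hv_ae_i : ∀ i, (fun t => (u : ℝ → Fin n → ℝ) t)
          =ᵐ[volume.restrict (Ioo (a i) (b i))] v :=
        fun i => hv_ae.filter_mono (ae_mono (hrle i))
      have hAESM_v_i : ∀ i, AEStronglyMeasurable (fun t => v t (j i))
          (volume.restrict (Ioo (a i) (b i))) := by
        intro i
        have h1 : AEStronglyMeasurable (fun t => (u : ℝ → Fin n → ℝ) t)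
            (volume.restrict (Ioo (a i) (b i))) :=
          (Lp.aestronglyMeasurable u).mono_measure (hrle i)
        have h2 : AEStronglyMeasurable (fun t => (u : ℝ → Fin n → ℝ) t (j i))
            (volume.restrict (Ioo (a i) (b i))) :=
          (continuous_apply (j i)).comp_aestronglyMeasurable h1
        exact h2.congr ((hv_ae_i i).mono fun t ht => congrFun ht (j i))
      have hAESM_v_map : ∀ i, AEStronglyMeasurable (fun t => v t (j i))
          (Measure.map (aff i) ν) := by
        intro i
        rw [hmap i]
        exact (hAESM_v_i i).mono_ac Measure.smul_absolutelyContinuous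
      have hqmp_self : ∀ i, Measure.QuasiMeasurePreserving (aff i) ν (Measure.map (aff i) ν) :=
        fun i => ⟨haff_meas i, Measure.AbsolutelyContinuous.rfl⟩
      have hΦaem : ∀ i, AEMeasurable (fun θ => v (aff i θ) (j i)) ν := by
        intro i
        have := (hAESM_v_map i).comp_quasiMeasurePreserving (hqmp_self i)
        exact this.aemeasurable
      set g : Fin M → ℝ → ℝ := fun i => (hΦaem i).mk _ with hgdef
      have hg_meas : ∀ i, Measurable (g i) := fun i => (hΦaem i).measurable_mk
      have hg_ae : ∀ i, (fun θ => v (aff i θ) (j i)) =ᵐ[ν] g i := fun i => (hΦaem i).ae_eq_mk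
      -- integral identity
      have hkey : ∀ i, projM T n p M a b j u i = ∫ θ, g i θ ∂ν := by
        intro i
        have hres : (volume.restrict (Ioo (0:ℝ) T)).restrict (Ioo (a i) (b i))
            = volume.restrict (Ioo (a i) (b i)) := by
          rw [Measure.restrict_restrict measurableSet_Ioo,
            inter_eq_self_of_subset_left (hsub i)]
        have e1 : (∫ t in Ioo (a i) (b i), (u : ℝ → Fin n → ℝ) t (j i)
            ∂(volume.restrict (Ioo (0:ℝ) T)))
            = ∫ t, v t (j i) ∂(volume.restrict (Ioo (a i) (b i))) := by
          rw [hres]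
          exact integral_congr_ae ((hv_ae_i i).mono fun t ht => congrFun ht (j i))
        have habne : ENNReal.ofReal (b i - a i) ≠ 0 := by
          simp only [ne_eq, ENNReal.ofReal_eq_zero, not_le]
          linarith [hab i]
        have hsmul : volume.restrict (Ioo (a i) (b i))
            = ENNReal.ofReal (b i - a i) • Measure.map (aff i) ν := by
          rw [hmap i, smul_smul, ENNReal.mul_inv_cancel habne ENNReal.ofReal_ne_top, one_smul]
        have e2 : ∫ t, v t (j i) ∂(volume.restrict (Ioo (a i) (b i)))
            = (b i - a i) * ∫ t, v t (j i) ∂(Measure.map (aff i) ν) := by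
          rw [hsmul, integral_smul_measure, ENNReal.toReal_ofReal (by linarith [hab i]),
            smul_eq_mul]
        have e3 : ∫ t, v t (j i) ∂(Measure.map (aff i) ν)
            = ∫ θ, v (aff i θ) (j i) ∂ν :=
          integral_map (haff_meas i).aemeasurable (hAESM_v_map i)
        have e4 : ∫ θ, v (aff i θ) (j i) ∂ν = ∫ θ, g i θ ∂ν :=
          integral_congr_ae (hg_ae i)
        show (b i - a i)⁻¹ * _ = _
        rw [e1, e2, e3, e4, ← mul_assoc,
          inv_mul_cancel₀ (by linarith [hab i] : b i - a i ≠ 0), one_mul]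
      -- decomposition
      set x : (Fin M → Bool) → (Fin M → ℝ) := fun β i => if β i then 1 else 0 with hxdef
      set E : (Fin M → Bool) → Set ℝ :=
        fun β => Ioo (0:ℝ) 1 ∩ ⋂ i, (g i) ⁻¹' {x β i} with hEdef
      have hE_meas : ∀ β, MeasurableSet (E β) := fun β =>
        measurableSet_Ioo.inter (MeasurableSet.iInter fun i =>
          (hg_meas i) (measurableSet_singleton _))
      set c : (Fin M → Bool) → ℝ := fun β => (ν (E β)).toReal with hcdef
      have hE_fin : ∀ β, ν (E β) ≠ ⊤ := fun β => (measure_lt_top ν _).ne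
      have hae_good : ∀ᵐ θ ∂ν, θ ∈ Ioo (0:ℝ) 1 ∧ ∀ i, g i θ = v (aff i θ) (j i) := by
        refine (ae_restrict_mem measurableSet_Ioo).and ?_
        rw [ae_all_iff]
        exact fun i => (hg_ae i).symm
      have h01 : ∀ θ ∈ Ioo (0:ℝ) 1, ∀ i, v (aff i θ) (j i) = 0 ∨ v (aff i θ) (j i) = 1 :=
        fun θ hθ i => hU _ (hv_mem _ (hsub i (haff_mem i θ hθ))) (j i)
      have hE_disj : ∀ β β', β ≠ β' → Disjoint (E β) (E β') := by
        intro β β' hne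
        rw [Set.disjoint_left]
        intro θ h1 h2
        apply hne
        funext i
        have e1 : g i θ = x β i := by simpa using Set.mem_iInter.1 h1.2 i
        have e2 : g i θ = x β' i := by simpa using Set.mem_iInter.1 h2.2 i
        have e3 : x β i = x β' i := by rw [← e1, e2]
        by_cases hb : β i <;> by_cases hb' : β' i <;>
          simp only [hxdef, hb, hb', if_true, if_false] at e3 ⊢ <;> norm_num at e3
      have hmem_E : ∀ θ, θ ∈ Ioo (0:ℝ) 1 → (∀ i, g i θ = v (aff i θ) (j i)) →
          θ ∈ E (fun k => if g k θ = 1 then true else false) := by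
        intro θ hθ hgθ
        refine ⟨hθ, Set.mem_iInter.2 fun k => ?_⟩
        simp only [Set.mem_preimage, Set.mem_singleton_iff]
        rcases h01 θ hθ k with h | h
        · have hg0 : g k θ = 0 := by rw [hgθ k, h]
          rw [hg0]
          simp only [hxdef, hg0]
          norm_num
        · have hg1 : g k θ = 1 := by rw [hgθ k, h]
          rw [hg1]
          simp only [hxdef, hg1, if_true]
      have hrep : ∀ i, (g i) =ᵐ[ν]
          fun θ => ∑ β : Fin M → Bool, (E β).indicator (fun _ => x β i) θ := by
        intro i
        filter_upwards [hae_good] with θ hgood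
        obtain ⟨hθ, hgθ⟩ := hgood
        set β₀ : Fin M → Bool := fun k => if g k θ = 1 then true else false with hβ₀def
        have hmem : θ ∈ E β₀ := hmem_E θ hθ hgθ
        rw [Finset.sum_eq_single β₀]
        · rw [Set.indicator_of_mem hmem]
          have := Set.mem_iInter.1 hmem.2 i
          simpa using this
        · intro β' _ hne
          exact Set.indicator_of_notMem
            (Set.disjoint_right.1 (hE_disj β' β₀ hne) hmem) _
        · intro habs; exact absurd (Finset.mem_univ _) habs
      have hint : ∀ i, ∫ θ, g i θ ∂ν = ∑ β : Fin M → Bool, c β * x β i := by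
        intro i
        rw [integral_congr_ae (hrep i), integral_finset_sum]
        · refine Finset.sum_congr rfl fun β _ => ?_
          rw [integral_indicator_const _ (hE_meas β), smul_eq_mul]; rfl
        · intro β _
          exact (integrable_const _).indicator (hE_meas β)
      have hν_univ : ν Set.univ = 1 := by
        rw [hνdef, Measure.restrict_apply_univ, Real.volume_Ioo]
        norm_num
      have hsum_c : (∑ β : Fin M → Bool, c β) = 1 := by
        have h1 : (∑ β : Fin M → Bool, ν (E β)) = ν (⋃ β, E β) := by
          rw [measure_iUnion (fun β β' hne => hE_disj β β' hne) hE_meas, tsum_fintype]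
        have h2 : ν (⋃ β, E β) = 1 := by
          apply le_antisymm
          · rw [← hν_univ]; exact measure_mono (Set.subset_univ _)
          · have hae_mem : ∀ᵐ θ ∂ν, θ ∈ ⋃ β, E β := by
              filter_upwards [hae_good] with θ hgood
              obtain ⟨hθ, hgθ⟩ := hgood
              exact Set.mem_iUnion.2 ⟨_, hmem_E θ hθ hgθ⟩
            have hcompl : ν ((⋃ β, E β)ᶜ) = 0 := ae_iff.1 hae_mem
            calc (1:ℝ≥0∞) = ν Set.univ := hν_univ.symm
              _ ≤ ν (⋃ β, E β) + ν ((⋃ β, E β)ᶜ) := by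
                  rw [← Set.union_compl_self (⋃ β, E β)]
                  exact measure_union_le _ _
              _ = ν (⋃ β, E β) := by rw [hcompl, add_zero]
        rw [hcdef]
        simp only
        rw [← ENNReal.toReal_sum (fun β _ => hE_fin β), h1, h2, ENNReal.toReal_one]
      have hβ_mem : ∀ β : Fin M → Bool, c β ≠ 0 →
          x β ∈ projM T n p M a b j ''
            {u' ∈ Dmax T n σ U p | ∀ i : Fin M, ∃ w ∈ U,
              ∀ᵐ t ∂(volume.restrict (Ioo (a i) (b i))),
                (u' : ℝ → Fin n → ℝ) t = w} := by
        intro β hcβ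
        have hpos : ν (E β) ≠ 0 := by
          intro h0
          apply hcβ
          rw [hcdef]
          simp only [h0, ENNReal.toReal_zero]
        have hexθ : ∃ θ, θ ∈ E β ∧ θ ∈ Ioo (0:ℝ) 1 ∧ ∀ i, g i θ = v (aff i θ) (j i) := by
          by_contra hcon
          apply hpos
          refine measure_mono_null (fun θ hθ => ?_) (ae_iff.1 hae_good)
          simp only [Set.mem_setOf_eq]
          exact fun hP => hcon ⟨θ, hθ, hP⟩
        obtain ⟨θ, hθE, hθI, hθg⟩ := hexθ
        have hsp : ∀ i, aff i θ ∈ Ioo (a i) (b i) := fun i => haff_mem i θ hθI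
        obtain ⟨u', hu'D, hu'const⟩ := sample_lemma T n σ U p M a b hsub hdisj u v
          hv_ae hv_mem hv_var hU (fun i => aff i θ) hsp
        refine ⟨u', ⟨hu'D, fun i => ⟨v (aff i θ), hv_mem _ (hsub i (hsp i)), hu'const i⟩⟩, ?_⟩
        funext i
        rw [projM_of_ae_const u' i (hab i) (hsub i) (v (aff i θ)) (hu'const i)]
        have e1 : g i θ = x β i := by simpa using Set.mem_iInter.1 hθE.2 i
        rw [← hθg i, e1]
      have hxeq : projM T n p M a b j u = ∑ β : Fin M → Bool, c β • x β := by
        funext i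
        rw [hkey i, hint i]
        simp [Finset.sum_apply, smul_eq_mul]
      set tfin := Finset.univ.filter (fun β : Fin M → Bool => c β ≠ 0) with htfindef
      have hsum_t : (∑ β ∈ tfin, c β) = 1 := by
        rw [htfindef, Finset.sum_filter_ne_zero]
        exact hsum_c
      have hmass : tfin.centerMass c x = projM T n p M a b j u := by
        rw [Finset.centerMass, hsum_t, inv_one, one_smul, hxeq]
        apply Finset.sum_subset (Finset.subset_univ _)
        intro β _ hβ
        have hc0 : c β = 0 := by
          by_contra hc0
          exact hβ (by simp [htfindef, hc0])
        simp [hc0]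
      rw [← hmass]
      exact Finset.centerMass_mem_convexHull tfin
        (fun β _ => ENNReal.toReal_nonneg)
        (by rw [hsum_t]; norm_num)
        (fun β hβ => hβ_mem β (by simpa [htfindef] using hβ))
    · exact convexHull_mono (Set.image_mono (Set.sep_subset _ _))
  · rintro x ⟨u, ⟨hu, hconst⟩, rfl⟩
    intro i
    obtain ⟨w, hwU, hw⟩ := hconst i
    rw [projM_of_ae_const u i (hab i) (hsub i) w hw]
    exact hU w hwU (j i)
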